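/- Suppose real numbers u_1, ..., u_T satisfy u_t − u_s ≥ μ^t(x^s) − μ^t(x^t) for all t, s ∈ {1,...,T}, where each μ^t : X → ℝ is continuous and decreasing. Define u : X → ℝ by u(x) = min_{t ∈ {1,...,T}} { u_t + μ^t(x^t) − μ^t(x) }. Then (i) u is continuous, (ii) u is increasing (since each μ^t is decreasing), and (iii) u(x^t) = u_t for every t. -/

import Mathlib

/-- Extension step: given utility numbers solving the quasilinear Afriat inequalities,
the function `u(x) = min_t { u_t + μ^t(x^t) − μ^t(x) }` is (i) continuous on `X`,
(ii) increasing on `X`, and (iii) interpolates the data: `u(x^t) = u_t`. -/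
theorem afriat_extension_properties {n T : ℕ} (hT : 0 < T)
    (X : Set (Fin n → ℝ)) (xs : Fin T → (Fin n → ℝ)) (hxX : ∀ t, xs t ∈ X)
    (μ : Fin T → (Fin n → ℝ) → ℝ)
    (hcont : ∀ t, ContinuousOn (μ t) X)
    (hdecr : ∀ t, ∀ x ∈ X, ∀ y ∈ X, x ≤ y → μ t y ≤ μ t x)
    (uv : Fin T → ℝ)
    (hafriat : ∀ t s : Fin T, uv t - uv s ≥ μ t (xs s) - μ t (xs t))
    (u : (Fin n → ℝ) → ℝ)
    (hu : ∀ x, u x = sInf (Set.range fun t : Fin T => uv t + μ t (xs t) - μ t x)) :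
    ContinuousOn u X ∧
    (∀ x ∈ X, ∀ y ∈ X, x ≤ y → u x ≤ u y) ∧
    (∀ t, u (xs t) = uv t) := by
  haveI : Nonempty (Fin T) := ⟨⟨0, hT⟩⟩
  have hne : (Finset.univ : Finset (Fin T)).Nonempty := Finset.univ_nonempty
  have hfin : ∀ x, u x = Finset.univ.inf' hne (fun t : Fin T => uv t + μ t (xs t) - μ t x) := by
    intro x
    rw [hu x, Finset.inf'_eq_csInf_image]
    congr 1
    rw [Finset.coe_univ, Set.image_univ]
  refine ⟨?_, ?_, ?_⟩
  · have : ContinuousOn (fun x => Finset.univ.inf' hne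
        (fun t : Fin T => uv t + μ t (xs t) - μ t x)) X := by
      apply ContinuousOn.finset_inf'_apply hne
      intro i _
      exact (continuousOn_const.add continuousOn_const).sub (hcont i)
    exact this.congr (fun x _ => hfin x)
  · intro x hx y hy hxy
    rw [hfin x, hfin y]
    apply Finset.le_inf'
    intro t _
    calc Finset.univ.inf' hne (fun t : Fin T => uv t + μ t (xs t) - μ t x)
        ≤ uv t + μ t (xs t) - μ t x := Finset.inf'_le _ (Finset.mem_univ t)
      _ ≤ uv t + μ t (xs t) - μ t y := by
          have := hdecr t x hx y hy hxy
          linarith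
  · intro t
    rw [hfin (xs t)]
    apply le_antisymm
    · have := Finset.inf'_le (fun s : Fin T => uv s + μ s (xs s) - μ s (xs t))
        (Finset.mem_univ t)
      simp only [add_sub_cancel_right] at this
      exact this
    · apply Finset.le_inf'
      intro s _
      have := hafriat s t
      linarith
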